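/- Let l ≥ 1, n ≥ 1, let α₁,...,α_n ≥ 0 with α_n > 0, φ₁,...,φ_n ∈ ℝ, θ₀ < θ₁, C ∈ (0,1) with cos(φ_n - (n/l)θ) ≥ C for all θ ∈ [θ₀, θ₁], and let R > 0. Set f(ρ, θ) = Σ_{k=1}^{n} α_k ρ^{-k/l} cos(φ_k - (k/l)θ). Then for a subset V of {(ρ, θ) : 0 < ρ < R, θ₀ < θ < θ₁}, the following are equivalent: (i) there exists A > 0 with f(ρ, θ) < A for all (ρ, θ) ∈ V; (ii) there exists δ ∈ (0, R) with ρ > δ for all (ρ, θ) ∈ V. -/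
import Mathlib

open Real Finset

set_option maxHeartbeats 1000000 in
theorem stmt4 (l n : ℕ) (hl : 1 ≤ l) (hn : 1 ≤ n)
    (α φ : ℕ → ℝ) (hα : ∀ k ∈ Finset.Icc 1 n, 0 ≤ α k) (hαn : 0 < α n)
    (θ₀ θ₁ C : ℝ) (hθ : θ₀ < θ₁) (hC0 : 0 < C) (hC1 : C < 1)
    (hcos : ∀ θ ∈ Set.Icc θ₀ θ₁, C ≤ Real.cos (φ n - ((n : ℝ) / l) * θ))
    (R : ℝ) (hR : 0 < R)
    (V : Set (ℝ × ℝ))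
    (hV : V ⊆ {p : ℝ × ℝ | 0 < p.1 ∧ p.1 < R ∧ θ₀ < p.2 ∧ p.2 < θ₁}) :
    (∃ A > 0, ∀ p ∈ V,
        (∑ k ∈ Finset.Icc 1 n, α k * p.1 ^ (-(k : ℝ) / l) * Real.cos (φ k - ((k : ℝ) / l) * p.2)) < A)
      ↔ (∃ δ : ℝ, 0 < δ ∧ δ < R ∧ ∀ p ∈ V, δ < p.1) := by
  have hl0 : (0:ℝ) < l := by exact_mod_cast hl
  constructor
  · rintro ⟨A, hA, hAb⟩
    set S := ∑ k ∈ (Finset.Icc 1 n).erase n, α k with hSdef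
    have hS : 0 ≤ S := Finset.sum_nonneg fun k hk => hα k (Finset.mem_of_mem_erase hk)
    set M := (A + S) / (α n * C) with hMdef
    have hM : 0 < M := div_pos (by linarith) (mul_pos hαn hC0)
    set δ₀ : ℝ := M ^ (-(l:ℝ)) with hδ₀def
    have hδ₀ : 0 < δ₀ := Real.rpow_pos_of_pos hM _
    set δ : ℝ := min δ₀ (min 1 (R/2)) with hδdef
    have hδpos : 0 < δ := lt_min hδ₀ (lt_min one_pos (by linarith))
    have hδR : δ < R := lt_of_le_of_lt (le_trans (min_le_right _ _) (min_le_right _ _)) (by linarith)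
    have hδ1 : δ ≤ 1 := le_trans (min_le_right _ _) (min_le_left _ _)
    refine ⟨δ, hδpos, hδR, ?_⟩
    intro p hp
    by_contra hcon
    push_neg at hcon
    obtain ⟨hρ0, hρR, hθa, hθb⟩ := hV hp
    have hρ1 : p.1 ≤ 1 := hcon.trans hδ1
    have hρδ₀ : p.1 ≤ δ₀ := hcon.trans (min_le_left _ _)
    have hcosn : C ≤ Real.cos (φ n - ((n : ℝ) / l) * p.2) :=
      hcos p.2 ⟨hθa.le, hθb.le⟩
    have hexp : -(1:ℝ)/l ≤ 0 := by
      apply div_nonpos_of_nonpos_of_nonneg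
      · norm_num
      · exact hl0.le
    have hrM : M ≤ p.1 ^ (-(1:ℝ) / l) := by
      have h1 : δ₀ ^ (-(1:ℝ)/l) ≤ p.1 ^ (-(1:ℝ)/l) :=
        Real.rpow_le_rpow_of_nonpos hρ0 hρδ₀ hexp
      have h2 : δ₀ ^ (-(1:ℝ)/l) = M := by
        rw [hδ₀def, ← Real.rpow_mul hM.le]
        have he : (-(l:ℝ)) * (-(1:ℝ)/l) = 1 := by field_simp
        rw [he, Real.rpow_one]
      linarith [h1, h2.symm.le]
    set e1 : ℝ := p.1 ^ (-((n:ℝ)-1)/l) with he1def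
    set e2 : ℝ := p.1 ^ (-(1:ℝ)/l) with he2def
    have hn1 : (0:ℝ) ≤ (n:ℝ) - 1 := by
      have : (1:ℝ) ≤ n := by exact_mod_cast hn
      linarith
    have he1 : 1 ≤ e1 := by
      apply Real.one_le_rpow_of_pos_of_le_one_of_nonpos hρ0 hρ1
      apply div_nonpos_of_nonpos_of_nonneg
      · linarith
      · exact hl0.le
    have hmem : n ∈ Finset.Icc 1 n := Finset.mem_Icc.mpr ⟨hn, le_refl n⟩
    have hsplit : (∑ k ∈ Finset.Icc 1 n, α k * p.1 ^ (-(k:ℝ)/l) * Real.cos (φ k - ((k:ℝ)/l) * p.2))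
        = (∑ k ∈ (Finset.Icc 1 n).erase n, α k * p.1 ^ (-(k:ℝ)/l) * Real.cos (φ k - ((k:ℝ)/l) * p.2))
          + α n * p.1 ^ (-(n:ℝ)/l) * Real.cos (φ n - ((n:ℝ)/l) * p.2) :=
      (Finset.sum_erase_add _ _ hmem).symm
    have hterm : ∀ k ∈ (Finset.Icc 1 n).erase n,
        -(α k * e1) ≤ α k * p.1 ^ (-(k:ℝ)/l) * Real.cos (φ k - ((k:ℝ)/l) * p.2) := by
      intro k hk
      have hαk : 0 ≤ α k := hα k (Finset.mem_of_mem_erase hk)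
      have hkn : (k:ℝ) ≤ (n:ℝ) - 1 := by
        have h1 : k ≠ n := Finset.ne_of_mem_erase hk
        have h2 : k ≤ n := (Finset.mem_Icc.mp (Finset.mem_of_mem_erase hk)).2
        have h3 : k < n := lt_of_le_of_ne h2 h1
        have h4 : (k:ℝ) + 1 ≤ n := by exact_mod_cast h3
        linarith
      have hle : p.1 ^ (-(k:ℝ)/l) ≤ e1 := by
        apply Real.rpow_le_rpow_of_exponent_ge hρ0 hρ1
        gcongr <;> linarith
      have hpos : 0 < p.1 ^ (-(k:ℝ)/l) := Real.rpow_pos_of_pos hρ0 _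
      have hc : -1 ≤ Real.cos (φ k - ((k:ℝ)/l) * p.2) := Real.neg_one_le_cos _
      nlinarith [mul_le_mul_of_nonneg_left hle hαk,
        mul_nonneg (mul_nonneg hαk hpos.le)
          (by linarith [hc] : (0:ℝ) ≤ Real.cos (φ k - ((k:ℝ)/l) * p.2) + 1)]
    have hsum1 : -(S * e1) ≤
        ∑ k ∈ (Finset.Icc 1 n).erase n, α k * p.1 ^ (-(k:ℝ)/l) * Real.cos (φ k - ((k:ℝ)/l) * p.2) := by
      have := Finset.sum_le_sum hterm
      calc -(S * e1) = ∑ k ∈ (Finset.Icc 1 n).erase n, -(α k * e1) := by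
            rw [Finset.sum_neg_distrib, hSdef, Finset.sum_mul]
        _ ≤ _ := this
    have hnsplit : p.1 ^ (-(n:ℝ)/l) = e1 * e2 := by
      rw [he1def, he2def, ← Real.rpow_add hρ0]
      congr 1
      ring
    have hposn : 0 < p.1 ^ (-(n:ℝ)/l) := Real.rpow_pos_of_pos hρ0 _
    have htn : α n * p.1 ^ (-(n:ℝ)/l) * C ≤
        α n * p.1 ^ (-(n:ℝ)/l) * Real.cos (φ n - ((n:ℝ)/l) * p.2) :=
      mul_le_mul_of_nonneg_left hcosn (mul_nonneg hαn.le hposn.le)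
    have hACM : α n * C * M = A + S := by
      rw [hMdef]
      field_simp
    have hMe2 : A + S ≤ α n * C * e2 := by
      calc A + S = α n * C * M := hACM.symm
        _ ≤ α n * C * e2 := mul_le_mul_of_nonneg_left hrM (mul_pos hαn hC0).le
    have hflt := hAb p hp
    rw [hsplit, hnsplit] at hflt
    nlinarith [mul_nonneg (sub_nonneg.mpr he1) (by linarith : (0:ℝ) ≤ α n * C * e2 - S)]
  · rintro ⟨δ, hδ0, hδR, hδV⟩
    refine ⟨1 + ∑ k ∈ Finset.Icc 1 n, α k * δ ^ (-(k:ℝ)/l), by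
      have : 0 ≤ ∑ k ∈ Finset.Icc 1 n, α k * δ ^ (-(k:ℝ)/l) :=
        Finset.sum_nonneg fun k hk => mul_nonneg (hα k hk) (Real.rpow_pos_of_pos hδ0 _).le
      linarith, ?_⟩
    intro p hp
    obtain ⟨hρ0, hρR, hθa, hθb⟩ := hV hp
    have hδρ : δ ≤ p.1 := (hδV p hp).le
    have hbound : ∀ k ∈ Finset.Icc 1 n,
        α k * p.1 ^ (-(k:ℝ)/l) * Real.cos (φ k - ((k:ℝ)/l) * p.2) ≤ α k * δ ^ (-(k:ℝ)/l) := by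
      intro k hk
      have h1 : α k * p.1 ^ (-(k:ℝ)/l) * Real.cos (φ k - ((k:ℝ)/l) * p.2)
          ≤ α k * p.1 ^ (-(k:ℝ)/l) * 1 := by
        apply mul_le_mul_of_nonneg_left (Real.cos_le_one _)
        exact mul_nonneg (hα k hk) (Real.rpow_pos_of_pos hρ0 _).le
      have h2 : p.1 ^ (-(k:ℝ)/l) ≤ δ ^ (-(k:ℝ)/l) := by
        apply Real.rpow_le_rpow_of_nonpos hδ0 hδρ
        have hk1 : 1 ≤ k := (Finset.mem_Icc.mp hk).1
        have : (0:ℝ) ≤ k := by positivity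
        apply div_nonpos_of_nonpos_of_nonneg <;> linarith
      calc α k * p.1 ^ (-(k:ℝ)/l) * Real.cos (φ k - ((k:ℝ)/l) * p.2)
          ≤ α k * p.1 ^ (-(k:ℝ)/l) * 1 := h1
        _ = α k * p.1 ^ (-(k:ℝ)/l) := by ring
        _ ≤ α k * δ ^ (-(k:ℝ)/l) := mul_le_mul_of_nonneg_left h2 (hα k hk)
    have := Finset.sum_le_sum hbound
    linarith
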